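/- Let $Q_1, \ldots, Q_k \subseteq \mathbb{R}^E$ be polytopes and $Q = \sum_{i=1}^k Q_i$ their Minkowski sum. Then a nonzero vector $w$ is an edge direction of $Q$ if and only if $w$ is an edge direction of $Q_i$ for some $i$. -/

import Mathlib

open Finset Pointwise

/-- `segment ℝ u v` (with `u ≠ v`) is a (bounded) edge of `Q` when it is an extreme
subset of `Q`, i.e. a one-dimensional face. -/
def IsEdgeOf {V : Type*} [AddCommGroup V] [Module ℝ V] (Q : Set V) (u v : V) : Prop :=
  u ≠ v ∧ IsExtreme ℝ Q (segment ℝ u v)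

/-- `w` is an edge direction of `Q` if some edge of `Q` is parallel to `w`. -/
def IsEdgeDirOf {V : Type*} [AddCommGroup V] [Module ℝ V] (Q : Set V) (w : V) : Prop :=
  ∃ u v, IsEdgeOf Q u v ∧ ∃ t : ℝ, t ≠ 0 ∧ v - u = t • w

section General

variable {V : Type*} [NormedAddCommGroup V] [NormedSpace ℝ V]

/-- If a convex combination with positive weights of points of a convex set `Q` lies in an
extreme subset `F`, then (at least) one of the points lies in `F`. -/
lemma extreme_absorb {Q F : Set V} (hQ : Convex ℝ Q) (hF : IsExtreme ℝ Q F)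
    {ι : Type*} {s : Finset ι} (hs : s.Nonempty) {μ : ι → ℝ} {x : ι → V}
    (hpos : ∀ i ∈ s, 0 < μ i) (hsum : ∑ i ∈ s, μ i = 1)
    (hmem : ∀ i ∈ s, x i ∈ Q) (hz : ∑ i ∈ s, μ i • x i ∈ F) :
    ∃ i ∈ s, x i ∈ F := by
  classical
  obtain ⟨a, ha⟩ := hs
  have hsum' : μ a + ∑ i ∈ s.erase a, μ i = 1 := by
    rw [Finset.add_sum_erase _ _ ha]; exact hsum
  have hz' : μ a • x a + ∑ i ∈ s.erase a, μ i • x i ∈ F := by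
    rw [Finset.add_sum_erase _ (fun i => μ i • x i) ha]; exact hz
  set σ := ∑ i ∈ s.erase a, μ i with hσ
  have hσ0 : 0 ≤ σ := Finset.sum_nonneg fun i hi => (hpos i (Finset.mem_of_mem_erase hi)).le
  rcases eq_or_lt_of_le hσ0 with hσz | hσpos
  · have hall : ∀ i ∈ s.erase a, μ i = 0 :=
      (Finset.sum_eq_zero_iff_of_nonneg
        (fun i hi => (hpos i (Finset.mem_of_mem_erase hi)).le)).mp hσz.symm
    have h1 : μ a = 1 := by
      have : σ = 0 := hσz.symm
      linarith
    have hz0 : ∑ i ∈ s.erase a, μ i • x i = 0 :=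
      Finset.sum_eq_zero fun i hi => by rw [hall i hi, zero_smul]
    refine ⟨a, ha, ?_⟩
    simpa [hz0, h1] using hz'
  · set y := σ⁻¹ • ∑ i ∈ s.erase a, μ i • x i with hy_def
    have hy : y ∈ Q := by
      rw [hy_def, Finset.smul_sum]
      simp_rw [smul_smul]
      refine hQ.sum_mem (fun i hi => mul_nonneg (inv_nonneg.2 hσ0)
        (hpos i (Finset.mem_of_mem_erase hi)).le) ?_
        (fun i hi => hmem i (Finset.mem_of_mem_erase hi))
      rw [← Finset.mul_sum, ← hσ, inv_mul_cancel₀ (ne_of_gt hσpos)]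
    have hya : μ a • x a + σ • y ∈ F := by
      rw [hy_def, smul_inv_smul₀ (ne_of_gt hσpos)]; exact hz'
    have hseg : μ a • x a + σ • y ∈ openSegment ℝ (x a) y :=
      ⟨μ a, σ, hpos a ha, hσpos, by linarith, rfl⟩
    exact ⟨a, ha, hF.2 (hmem a ha) hy hya hseg⟩

/-- A nonempty convex closed bounded subset of a line is a segment. -/
lemma line_seg {p w : V} (hw : w ≠ 0) {S : Set V} (hne : S.Nonempty) (hconv : Convex ℝ S)
    (hcl : IsClosed S) (hbd : Bornology.IsBounded S)
    (hline : ∀ x ∈ S, ∃ s : ℝ, x = s • w + p) :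
    ∃ a b : ℝ, a ≤ b ∧ S = segment ℝ (a • w + p) (b • w + p) := by
  obtain ⟨x₀, hx₀⟩ := hne
  set f : ℝ →ᵃ[ℝ] V :=
    { toFun := fun s => s • w + p
      linear := LinearMap.toSpanSingleton ℝ V w
      map_vadd' := by
        intro p' v
        simp only [LinearMap.toSpanSingleton_apply, vadd_eq_add]
        rw [add_smul]
        abel } with hf
  have hfc : Continuous fun s : ℝ => s • w + p :=
    (continuous_id.smul continuous_const).add continuous_const
  set T := (fun s : ℝ => s • w + p) ⁻¹' S with hTdef
  have hTconv : Convex ℝ T := hconv.affine_preimage f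
  have hTcl : IsClosed T := hcl.preimage hfc
  have hTbd : Bornology.IsBounded T := by
    rw [isBounded_iff_forall_norm_le] at hbd ⊢
    obtain ⟨C, hC⟩ := hbd
    refine ⟨(C + ‖p‖) / ‖w‖, fun s hs => ?_⟩
    have h1 : ‖s • w + p‖ ≤ C := hC _ hs
    have h2 : ‖s • w‖ ≤ ‖s • w + p‖ + ‖p‖ := by
      have h3 := norm_add_le (s • w + p) (-p)
      simpa using h3
    have h4 : ‖s‖ * ‖w‖ ≤ C + ‖p‖ := by
      rw [← norm_smul]; linarith
    rw [Real.norm_eq_abs] at h4 ⊢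
    exact (le_div_iff₀ (norm_pos_iff.mpr hw)).mpr h4
  have hTne : T.Nonempty := by
    obtain ⟨s, hs⟩ := hline x₀ hx₀
    exact ⟨s, show s • w + p ∈ S from hs ▸ hx₀⟩
  have hTcomp : IsCompact T := Metric.isCompact_iff_isClosed_bounded.mpr ⟨hTcl, hTbd⟩
  obtain ⟨a, ha⟩ : ∃ a, sInf T = a := ⟨_, rfl⟩
  obtain ⟨b, hb⟩ : ∃ b, sSup T = b := ⟨_, rfl⟩
  have haT : a ∈ T := ha ▸ hTcomp.sInf_mem hTne
  have hbT : b ∈ T := hb ▸ hTcomp.sSup_mem hTne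
  have hab : a ≤ b := ha ▸ hb ▸ csInf_le_csSup hTne hTcomp.bddBelow hTcomp.bddAbove
  have hTIcc : T = Set.Icc a b :=
    subset_antisymm
      (fun x hx => ⟨ha ▸ csInf_le hTcomp.bddBelow hx, hb ▸ le_csSup hTcomp.bddAbove hx⟩)
      (hTconv.ordConnected.out haT hbT)
  refine ⟨a, b, hab, ?_⟩
  have himg : S = (fun s : ℝ => s • w + p) '' T := by
    ext x
    constructor
    · intro hx
      obtain ⟨s, hs⟩ := hline x hx
      exact ⟨s, show s • w + p ∈ S from hs ▸ hx, hs.symm⟩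
    · rintro ⟨s, hs, rfl⟩
      exact hs
  rw [himg, hTIcc, ← segment_eq_Icc hab]
  exact image_segment ℝ f a b

lemma hull_le {ℓ : V →ₗ[ℝ] ℝ} {c : ℝ} {X : Set V} (h : ∀ x ∈ X, ℓ x ≤ c) :
    ∀ x ∈ convexHull ℝ X, ℓ x ≤ c := by
  exact fun x hx =>
    convexHull_min h (convex_halfSpace_le (LinearMap.isLinear ℓ) c) hx

/-- A point of a polytope where a linear functional attains its max over the vertex set lies in
the convex hull of the vertices attaining the max. -/
lemma face_hull_filter {ℓ : V →ₗ[ℝ] ℝ} {c : ℝ} {Vs : Finset V}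
    (hle : ∀ x ∈ Vs, ℓ x ≤ c) {aa : V} (ha : aa ∈ convexHull ℝ (↑Vs : Set V))
    (hc : ℓ aa = c) : aa ∈ convexHull ℝ {x : V | x ∈ Vs ∧ ℓ x = c} := by
  classical
  rw [Finset.convexHull_eq] at ha
  obtain ⟨μ, h0, h1, hcm⟩ := ha
  rw [Finset.centerMass_eq_of_sum_1 _ id h1] at hcm
  simp only [id_eq] at hcm
  have hsum0 : ∑ x ∈ Vs, μ x * (c - ℓ x) = 0 := by
    have hℓaa : ∑ x ∈ Vs, μ x * ℓ x = c := by
      rw [← hc, ← hcm, map_sum]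
      simp [map_smul, smul_eq_mul]
    have hexp : ∑ x ∈ Vs, μ x * (c - ℓ x)
        = (∑ x ∈ Vs, μ x) * c - ∑ x ∈ Vs, μ x * ℓ x := by
      rw [Finset.sum_mul]
      rw [← Finset.sum_sub_distrib]
      congr 1
      ext x
      ring
    rw [hexp, h1, hℓaa, one_mul, sub_self]
  have hkey : ∀ x ∈ Vs, μ x ≠ 0 → ℓ x = c := by
    intro x hx hμx
    have h2 := (Finset.sum_eq_zero_iff_of_nonneg
      (fun x hx => mul_nonneg (h0 x hx) (sub_nonneg.2 (hle x hx)))).mp hsum0 x hx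
    rcases mul_eq_zero.mp h2 with h | h
    · exact absurd h hμx
    · exact (sub_eq_zero.mp h).symm
  set Vs' := Vs.filter (fun x => μ x ≠ 0) with hVs'
  have hsub : ∑ x ∈ Vs', μ x • x = aa := by
    rw [hVs', Finset.sum_filter_of_ne (fun x _ h => by
      intro h0x
      exact h (by rw [h0x, zero_smul]))]
    exact hcm
  have hsum1' : ∑ x ∈ Vs', μ x = 1 := by
    rw [hVs', Finset.sum_filter_of_ne (fun x _ h => h)]
    exact h1
  rw [← hsub]
  exact (convex_convexHull ℝ _).sum_mem
    (fun x hx => h0 x (Finset.filter_subset _ _ hx))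
    hsum1'
    (fun x hx => subset_convexHull ℝ _
      ⟨Finset.filter_subset _ _ hx, hkey x (Finset.filter_subset _ _ hx)
        (Finset.mem_filter.mp hx).2⟩)

/-- Points of a segment with direction `w`, parametrized. -/
lemma seg_param {u v w z : V} {t : ℝ} (huv : v - u = t • w) (hz : z ∈ segment ℝ u v) :
    ∃ θ : ℝ, θ ∈ Set.Icc (0:ℝ) 1 ∧ z = (θ * t) • w + u := by
  rw [segment_eq_image] at hz
  obtain ⟨θ, hθ, h⟩ := hz
  have hv : v = t • w + u := by rw [← huv]; abel
  exact ⟨θ, hθ, by rw [← h, hv]; module⟩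

/-- If `[u,v]` is extreme in `A`, then any point of `A` on the line through `u,v` lies in
`[u,v]`. -/
lemma line_cap {A : Set V} {u v w : V} {t : ℝ}
    (hext : IsExtreme ℝ A (segment ℝ u v)) (ht : 0 < t) (huv : v - u = t • w)
    {z : V} (hz : z ∈ A) {s : ℝ} (hzs : z = s • w + u) : z ∈ segment ℝ u v := by
  have hu : u ∈ A := hext.1 (left_mem_segment ℝ u v)
  have hv : v ∈ A := hext.1 (right_mem_segment ℝ u v)
  have hvw : v = t • w + u := by rw [← huv]; abel
  rcases lt_or_ge s 0 with hs | hs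
  · -- u ∈ openSegment z v, so z ∈ segment
    have hden : (0:ℝ) < t - s := by linarith
    have hsum1 : t / (t - s) + -s / (t - s) = 1 := by field_simp; ring
    have hmem : u ∈ openSegment ℝ z v := by
      refine ⟨t / (t - s), -s / (t - s), div_pos ht hden,
        div_pos (by linarith) hden, hsum1, ?_⟩
      rw [hzs, hvw]
      have h1 : (t / (t - s)) * s + (-s / (t - s)) * t = 0 := by
        field_simp
        ring
      have key : (t / (t - s)) • (s • w + u) + (-s / (t - s)) • (t • w + u)
          = ((t / (t - s)) * s + (-s / (t - s)) * t) • w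
            + (t / (t - s) + -s / (t - s)) • u := by module
      rw [key, h1, hsum1, zero_smul, one_smul, zero_add]
    exact hext.2 hz hv (left_mem_segment ℝ u v) hmem
  · rcases le_or_gt s t with hst | hst
    · -- z is in the segment directly
      rw [segment_eq_image]
      refine ⟨s / t, ⟨div_nonneg hs ht.le, (div_le_one ht).2 hst⟩, ?_⟩
      show (1 - s / t) • u + (s / t) • v = z
      rw [hvw, hzs]
      have key : (1 - s / t) • u + (s / t) • (t • w + u) = ((s / t) * t) • w + u := by
        module
      rw [key, div_mul_cancel₀ _ (ne_of_gt ht)]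
    · -- v ∈ openSegment u z
      have hs0 : (0:ℝ) < s := lt_trans ht hst
      have hsum1 : (s - t) / s + t / s = 1 := by field_simp; ring
      have hmem : v ∈ openSegment ℝ u z := by
        refine ⟨(s - t) / s, t / s, div_pos (by linarith) hs0, div_pos ht hs0,
          hsum1, ?_⟩
        rw [hzs, hvw]
        have key : ((s - t) / s) • u + (t / s) • (s • w + u)
            = ((t / s) * s) • w + ((s - t) / s + t / s) • u := by module
        rw [key, div_mul_cancel₀ _ (ne_of_gt hs0), hsum1, one_smul]
      exact hext.right_mem_of_mem_openSegment hu hz (right_mem_segment ℝ u v) hmem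

/-- Membership in an oriented segment in direction `w`. -/
lemma mem_seg_iff {u w : V} {t : ℝ} (ht : 0 ≤ t) {z : V} :
    z ∈ segment ℝ u (t • w + u) ↔ ∃ c : ℝ, 0 ≤ c ∧ c ≤ t ∧ z = c • w + u := by
  constructor
  · intro hz
    have hdir : (t • w + u) - u = t • w := by abel
    obtain ⟨θ, hθ, hp⟩ := seg_param hdir hz
    refine ⟨θ * t, mul_nonneg hθ.1 ht, ?_, hp⟩
    nlinarith [hθ.2]
  · rintro ⟨c, hc0, hct, rfl⟩
    rcases eq_or_lt_of_le (hc0.trans hct) with h0 | hpos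
    · have hc : c = 0 := le_antisymm (hct.trans h0.symm.le) hc0
      have ht0 : t = 0 := h0.symm
      rw [hc, ht0, zero_smul, zero_add]
      exact left_mem_segment ℝ u u
    · rw [segment_eq_image]
      refine ⟨c / t, ⟨div_nonneg hc0 hpos.le, (div_le_one hpos).2 hct⟩, ?_⟩
      show (1 - c / t) • u + (c / t) • (t • w + u) = c • w + u
      have key : (1 - c / t) • u + (c / t) • (t • w + u) = ((c / t) * t) • w + u := by
        module
      rw [key, div_mul_cancel₀ _ (ne_of_gt hpos)]

/-- Sum of two parallel segments with nonneg orientation. -/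
lemma seg_add_seg (u q w : V) {t r : ℝ} (ht : 0 ≤ t) (hr : 0 ≤ r) :
    segment ℝ u (t • w + u) + segment ℝ q (r • w + q)
      = segment ℝ (u + q) ((t + r) • w + (u + q)) := by
  ext z
  rw [Set.mem_add]
  constructor
  · rintro ⟨x, hx, y, hy, rfl⟩
    obtain ⟨c₁, hc₁0, hc₁t, rfl⟩ := (mem_seg_iff ht).mp hx
    obtain ⟨c₂, hc₂0, hc₂r, rfl⟩ := (mem_seg_iff hr).mp hy
    refine (mem_seg_iff (by linarith)).mpr ⟨c₁ + c₂, by linarith, by linarith, by module⟩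
  · intro hz
    obtain ⟨c, hc0, hctr, rfl⟩ := (mem_seg_iff (by linarith : (0:ℝ) ≤ t + r)).mp hz
    refine ⟨(min c t) • w + u, (mem_seg_iff ht).mpr ⟨min c t, le_min hc0 ht, min_le_right _ _, rfl⟩,
      (c - min c t) • w + q, (mem_seg_iff hr).mpr ⟨c - min c t, ?_, ?_, rfl⟩, by module⟩
    · have := min_le_left c t
      linarith
    · rcases le_total c t with h | h
      · rw [min_eq_left h]
        simpa using hr
      · rw [min_eq_right h]
        linarith

/-- The factor of an extreme segment of `A + B` inside `A` is again an extreme segment,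
parallel to the original one. -/
lemma faceFactor {A B : Set V} (hA : Convex ℝ A) (hB : Convex ℝ B)
    (cA : IsCompact A) (cB : IsCompact B) {u v w : V} {t : ℝ} (hw : w ≠ 0)
    (huv : v - u = t • w) (hext : IsExtreme ℝ (A + B) (segment ℝ u v)) :
    ∃ (p : V) (a b : ℝ), a ≤ b ∧
      A ∩ (segment ℝ u v - B) = segment ℝ (a • w + p) (b • w + p) ∧
      IsExtreme ℝ A (segment ℝ (a • w + p) (b • w + p)) := by
  have hFconv : Convex ℝ (segment ℝ u v) := convex_segment u v
  have hFcomp : IsCompact (segment ℝ u v) := by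
    rw [segment_eq_image]
    exact isCompact_Icc.image
      (((continuous_const.sub continuous_id).smul continuous_const).add
        (continuous_id.smul continuous_const))
  have hFBcomp : IsCompact (segment ℝ u v - B) := by
    rw [← Set.sub_image_prod]
    exact (hFcomp.prod cB).image (continuous_fst.sub continuous_snd)
  -- the factor
  have hconvFA : Convex ℝ (A ∩ (segment ℝ u v - B)) := hA.inter (hFconv.sub hB)
  have hclFA : IsClosed (A ∩ (segment ℝ u v - B)) :=
    cA.isClosed.inter hFBcomp.isClosed
  have hbdFA : Bornology.IsBounded (A ∩ (segment ℝ u v - B)) :=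
    cA.isBounded.subset Set.inter_subset_left
  -- nonemptiness, with a chosen point a₀
  have huAB : u ∈ A + B := hext.1 (left_mem_segment ℝ u v)
  rw [Set.mem_add] at huAB
  obtain ⟨a₀, ha₀, b₀, hb₀, hab₀⟩ := huAB
  have ha₀FA : a₀ ∈ A ∩ (segment ℝ u v - B) :=
    ⟨ha₀, Set.mem_sub.mpr ⟨u, left_mem_segment ℝ u v, b₀, hb₀, by rw [← hab₀]; abel⟩⟩
  have ha₀b₀F : a₀ + b₀ ∈ segment ℝ u v := by
    rw [hab₀]; exact left_mem_segment ℝ u v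
  -- all points of the factor lie on the line through a₀ in direction w
  have hline : ∀ x ∈ A ∩ (segment ℝ u v - B), ∃ s : ℝ, x = s • w + a₀ := by
    rintro x ⟨hxA, hxFB⟩
    rw [Set.mem_sub] at hxFB
    obtain ⟨f, hf, bb, hbb, hfb⟩ := hxFB
    have hxbb : x + bb ∈ segment ℝ u v := by
      have : f = x + bb := by rw [← hfb]; abel
      rwa [← this]
    have hmid : (1/2 : ℝ) • (x + bb) + (1/2 : ℝ) • (a₀ + b₀) ∈ segment ℝ u v :=
      hFconv hxbb ha₀b₀F (by norm_num) (by norm_num) (by norm_num)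
    have hopen : (1/2:ℝ) • (x + bb) + (1/2:ℝ) • (a₀ + b₀)
        ∈ openSegment ℝ (x + b₀) (a₀ + bb) :=
      ⟨1/2, 1/2, by norm_num, by norm_num, by norm_num, by module⟩
    have hxb₀ : x + b₀ ∈ A + B := Set.mem_add.mpr ⟨x, hxA, b₀, hb₀, rfl⟩
    have ha₀bb : a₀ + bb ∈ A + B := Set.mem_add.mpr ⟨a₀, ha₀, bb, hbb, rfl⟩
    have hxF : x + b₀ ∈ segment ℝ u v := hext.2 hxb₀ ha₀bb hmid hopen
    have ha₀F : a₀ + b₀ ∈ segment ℝ u v := ha₀b₀F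
    obtain ⟨θ₁, _, h₁⟩ := seg_param huv hxF
    obtain ⟨θ₂, _, h₂⟩ := seg_param huv ha₀F
    refine ⟨θ₁*t - θ₂*t, ?_⟩
    have e3 : (x + b₀) - (a₀ + b₀) = ((θ₁*t) • w + u) - ((θ₂*t) • w + u) := by
      rw [← h₁, ← h₂]
    have e4 : x - a₀ = (θ₁*t - θ₂*t) • w := by
      have e5 : (x + b₀) - (a₀ + b₀) = x - a₀ := by abel
      rw [e5] at e3
      rw [e3]; module
    have := eq_add_of_sub_eq e4
    rw [this]
  obtain ⟨a, b, hab, hSeq⟩ := line_seg hw ⟨a₀, ha₀FA⟩ hconvFA hclFA hbdFA hline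
  refine ⟨a₀, a, b, hab, hSeq, ?_⟩
  rw [← hSeq]
  constructor
  · exact Set.inter_subset_left
  · intro x₁ hx₁ x₂ hx₂ x hx hxseg
    obtain ⟨hxA, hxFB⟩ := hx
    rw [Set.mem_sub] at hxFB
    obtain ⟨f, hf, bb, hbb, hfb⟩ := hxFB
    have hxbbF : x + bb ∈ segment ℝ u v := by
      have : f = x + bb := by rw [← hfb]; abel
      rwa [← this]
    obtain ⟨lam, mu, hlam, hmu, hsum, heq⟩ := hxseg
    have hopen : x + bb ∈ openSegment ℝ (x₁ + bb) (x₂ + bb) := by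
      refine ⟨lam, mu, hlam, hmu, hsum, ?_⟩
      have e1 : lam • (x₁ + bb) + mu • (x₂ + bb)
          = (lam • x₁ + mu • x₂) + (lam + mu) • bb := by module
      rw [e1, hsum, heq, one_smul]
    have h1 := hext.2 (Set.mem_add.mpr ⟨x₁, hx₁, bb, hbb, rfl⟩)
      (Set.mem_add.mpr ⟨x₂, hx₂, bb, hbb, rfl⟩) hxbbF hopen
    exact ⟨hx₁, Set.mem_sub.mpr ⟨x₁ + bb, h1, bb, hbb, by abel⟩⟩

/-- Forward direction (binary): an edge direction of `A + B` is an edge direction of `A` or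
of `B`. -/
lemma forward {A B : Set V} (hA : Convex ℝ A) (hB : Convex ℝ B)
    (cA : IsCompact A) (cB : IsCompact B) {w : V} (hw : w ≠ 0)
    (h : IsEdgeDirOf (A + B) w) : IsEdgeDirOf A w ∨ IsEdgeDirOf B w := by
  obtain ⟨u, v, ⟨hne, hext⟩, t, ht0, hvu⟩ := h
  have hextBA : IsExtreme ℝ (B + A) (segment ℝ u v) := by rwa [add_comm B A]
  obtain ⟨p, a, b, hab, hFAeq, hFAext⟩ := faceFactor hA hB cA cB hw hvu hext
  obtain ⟨q, c, d, hcd, hFBeq, hFBext⟩ := faceFactor hB hA cB cA hw hvu hextBA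
  have decompose : ∀ z ∈ segment ℝ u v,
      ∃ x ∈ A ∩ (segment ℝ u v - B), ∃ y ∈ B ∩ (segment ℝ u v - A), x + y = z := by
    intro z hz
    have hzAB : z ∈ A + B := hext.1 hz
    rw [Set.mem_add] at hzAB
    obtain ⟨x, hxA, y, hyB, hxy⟩ := hzAB
    exact ⟨x, ⟨hxA, Set.mem_sub.mpr ⟨z, hz, y, hyB, by rw [← hxy]; abel⟩⟩,
      y, ⟨hyB, Set.mem_sub.mpr ⟨z, hz, x, hxA, by rw [← hxy]; abel⟩⟩, hxy⟩
  obtain ⟨x₁, hx₁, y₁, hy₁, hxy₁⟩ := decompose u (left_mem_segment ℝ u v)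
  obtain ⟨x₂, hx₂, y₂, hy₂, hxy₂⟩ := decompose v (right_mem_segment ℝ u v)
  rw [hFAeq] at hx₁ hx₂
  rw [hFBeq] at hy₁ hy₂
  have hdirA : (b • w + p) - (a • w + p) = (b - a) • w := by module
  have hdirB : (d • w + q) - (c • w + q) = (d - c) • w := by module
  obtain ⟨α₁, _, hx₁e⟩ := seg_param hdirA hx₁
  obtain ⟨α₂, _, hx₂e⟩ := seg_param hdirA hx₂
  obtain ⟨β₁, _, hy₁e⟩ := seg_param hdirB hy₁
  obtain ⟨β₂, _, hy₂e⟩ := seg_param hdirB hy₂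
  by_cases hba : b - a = 0
  · -- the B factor must be nondegenerate
    have hsum : t = (α₂*(b-a) - α₁*(b-a)) + (β₂*(d-c) - β₁*(d-c)) := by
      have hv2 : v - u = ((α₂*(b-a) - α₁*(b-a)) + (β₂*(d-c) - β₁*(d-c))) • w := by
        rw [← hxy₁, ← hxy₂, hx₁e, hx₂e, hy₁e, hy₂e]
        module
      exact smul_left_injective ℝ hw (hvu.symm.trans hv2)
    have hdc : d - c ≠ 0 := by
      intro h0
      apply ht0
      rw [hsum, hba, h0]
      ring
    right
    refine ⟨c • w + q, d • w + q, ⟨?_, hFBext⟩, d - c, hdc, hdirB⟩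
    intro heq
    apply hdc
    have h0 : (d - c) • w = 0 := by rw [← hdirB, heq, sub_self]
    exact (smul_eq_zero.mp h0).resolve_right hw
  · left
    refine ⟨a • w + p, b • w + p, ⟨?_, hFAext⟩, b - a, hba, hdirA⟩
    intro heq
    apply hba
    have h0 : (b - a) • w = 0 := by rw [← hdirA, heq, sub_self]
    exact (smul_eq_zero.mp h0).resolve_right hw

end General

section Euclidean

variable {E : Type*} [Fintype E]

/-- The dot product with `d`, as a linear functional on `E → ℝ`. -/
noncomputable def dotL (d : E → ℝ) : (E → ℝ) →ₗ[ℝ] ℝ := ∑ e : E, d e • LinearMap.proj e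

lemma dotL_apply (d x : E → ℝ) : dotL d x = ∑ e : E, d e * x e := by
  simp [dotL]

lemma dotL_comm (d x : E → ℝ) : dotL d x = dotL x d := by
  simp [dotL_apply, mul_comm]

lemma dotL_pos {d : E → ℝ} (hd : d ≠ 0) : 0 < dotL d d := by
  obtain ⟨e, he⟩ : ∃ e, d e ≠ 0 := by
    by_contra hc
    push_neg at hc
    exact hd (funext fun e => hc e)
  rw [dotL_apply]
  exact Finset.sum_pos' (fun e _ => mul_self_nonneg (d e))
    ⟨e, Finset.mem_univ e, mul_self_pos.2 he⟩

/-- Orthogonal projection onto the complement of `w`. -/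
noncomputable def barL (w : E → ℝ) : (E → ℝ) →ₗ[ℝ] (E → ℝ) :=
  LinearMap.id - LinearMap.smulRight ((dotL w w)⁻¹ • dotL w) w

lemma barL_apply (w x : E → ℝ) : barL w x = x - ((dotL w w)⁻¹ * dotL w x) • w := by
  simp [barL, LinearMap.smulRight_apply, smul_smul]

lemma barL_w {w : E → ℝ} (hw : w ≠ 0) : barL w w = 0 := by
  rw [barL_apply, dotL_comm, inv_mul_cancel₀ (dotL_pos hw).ne', one_smul, sub_self]

lemma barL_ker {w x : E → ℝ} (h : barL w x = 0) : ∃ c : ℝ, x = c • w := by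
  rw [barL_apply] at h
  exact ⟨_, sub_eq_zero.mp h⟩

lemma dotL_barL_w (w x : E → ℝ) : dotL (barL w x) w = 0 := by
  by_cases hw : w = 0
  · subst hw; simp [dotL_apply]
  · rw [barL_apply]
    have hsub : dotL (x - ((dotL w w)⁻¹ * dotL w x) • w) w
        = dotL x w - ((dotL w w)⁻¹ * dotL w x) * dotL w w := by
      simp [dotL_apply, sub_mul, Finset.sum_sub_distrib, Finset.mul_sum, mul_assoc]
    rw [hsub, dotL_comm x w]
    field_simp [(dotL_pos hw).ne']
    ring

lemma barL_eq {w x y : E → ℝ} (h : barL w x = barL w y) : ∃ c : ℝ, x = c • w + y := by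
  have h0 : barL w (x - y) = 0 := by rw [map_sub, h, sub_self]
  obtain ⟨c, hc⟩ := barL_ker h0
  exact ⟨c, by rw [← hc]; abel⟩

lemma apply_barL {ℓ : (E → ℝ) →ₗ[ℝ] ℝ} (hℓw : ℓ w = 0) (x : E → ℝ) :
    ℓ (barL w x) = ℓ x := by
  rw [barL_apply, map_sub, map_smul, hℓw, smul_zero, sub_zero]

/-- Small positive perturbations keep finitely many strict inequalities. -/
lemma eps_pos (ℓ h : (E → ℝ) →ₗ[ℝ] ℝ) (P : Finset (E → ℝ)) (hP : ∀ p ∈ P, 0 < ℓ p) :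
    ∃ δ : ℝ, 0 < δ ∧ ∀ ε : ℝ, 0 < ε → ε < δ → ∀ p ∈ P, 0 < ℓ p + ε * h p := by
  classical
  set g : (E → ℝ) → ℝ := fun p => if h p < 0 then ℓ p / (-(h p)) else 1 with hg
  set T : Finset ℝ := insert (1:ℝ) (P.image g) with hT
  have hTne : T.Nonempty := ⟨1, Finset.mem_insert_self _ _⟩
  have hTpos : ∀ y ∈ T, 0 < y := by
    intro y hy
    rw [hT, Finset.mem_insert] at hy
    rcases hy with rfl | hy
    · norm_num
    · obtain ⟨p, hp, rfl⟩ := Finset.mem_image.mp hy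
      rw [hg]
      by_cases hn : h p < 0
      · simp only [hn, if_true]
        exact div_pos (hP p hp) (by linarith)
      · simp only [hn, if_false]
        norm_num
  refine ⟨T.min' hTne, hTpos _ (T.min'_mem hTne), fun ε hε hεδ p hp => ?_⟩
  by_cases hn : h p < 0
  · have hle : T.min' hTne ≤ g p :=
      Finset.min'_le _ _ (Finset.mem_insert_of_mem (Finset.mem_image_of_mem g hp))
    have hεg : ε < ℓ p / (-(h p)) := by
      have : g p = ℓ p / (-(h p)) := by rw [hg]; simp [hn]
      linarith
    have := (lt_div_iff₀ (by linarith : (0:ℝ) < -(h p))).mp hεg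
    nlinarith
  · have : 0 ≤ ε * h p := mul_nonneg hε.le (not_lt.mp hn)
    have := hP p hp
    linarith

/-- Generic perturbation: we can additionally make the functional nonvanishing on finitely
many prescribed nonzero vectors orthogonal to `w`, keeping `ℓ w = 0` and finitely many strict
inequalities. -/
lemma perturb (w : E → ℝ) (P : Finset (E → ℝ)) (D : Finset (E → ℝ))
    (hD : ∀ d ∈ D, d ≠ 0 ∧ dotL d w = 0)
    (ℓ₀ : (E → ℝ) →ₗ[ℝ] ℝ) (hw0 : ℓ₀ w = 0) (hP : ∀ p ∈ P, 0 < ℓ₀ p) :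
    ∃ ℓ : (E → ℝ) →ₗ[ℝ] ℝ, ℓ w = 0 ∧ (∀ p ∈ P, 0 < ℓ p) ∧ ∀ d ∈ D, ℓ d ≠ 0 := by
  classical
  revert hD
  induction D using Finset.induction_on with
  | empty => exact fun _ => ⟨ℓ₀, hw0, hP, fun d hd => absurd hd (by simp)⟩
  | insert a s hnotmem ih =>
    intro hD
    obtain ⟨ℓ, hℓw, hℓP, hℓD⟩ := ih (fun d hd => hD d (Finset.mem_insert_of_mem hd))
    obtain ⟨ha0, haw⟩ := hD a (Finset.mem_insert_self _ _)
    obtain ⟨δ, hδ, hδP⟩ := eps_pos ℓ (dotL a) P hℓP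
    set Bad : Finset ℝ := (insert a s).image
      (fun d' => if dotL a d' = 0 then (-1:ℝ) else -(ℓ d') / (dotL a d')) with hBad
    obtain ⟨ε, hεIoo, hεB⟩ :=
      (Set.infinite_coe_iff.mp (Set.Ioo.infinite hδ)).exists_notMem_finset Bad
    obtain ⟨hε0, hεδ⟩ := hεIoo
    refine ⟨ℓ + ε • dotL a, ?_, ?_, ?_⟩
    · simp [hℓw, haw]
    · intro p hp
      have := hδP ε hε0 hεδ p hp
      simpa [smul_eq_mul] using this
    · intro d hd
      simp only [LinearMap.add_apply, LinearMap.smul_apply, smul_eq_mul]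
      intro hcontra
      by_cases hda : dotL a d = 0
      · rcases Finset.mem_insert.mp hd with rfl | hds
        · exact (dotL_pos ha0).ne' hda
        · rw [hda, mul_zero, add_zero] at hcontra
          exact hℓD d hds hcontra
      · apply hεB
        rw [hBad]
        refine Finset.mem_image.mpr ⟨d, hd, ?_⟩
        rw [if_neg hda]
        field_simp
        linarith [hcontra]

/-- Backward direction (binary), oriented case. -/
lemma backward' (Vs Ws : Finset (E → ℝ)) (hWs : (↑Ws : Set (E → ℝ)).Nonempty)
    {w : E → ℝ} (hw : w ≠ 0) {u v : E → ℝ} {t : ℝ} (ht : 0 < t) (huv : v - u = t • w)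
    (hedge : IsEdgeOf (convexHull ℝ (↑Vs : Set (E → ℝ))) u v) :
    IsEdgeDirOf (convexHull ℝ (↑Vs : Set (E → ℝ)) + convexHull ℝ (↑Ws : Set (E → ℝ))) w := by
  classical
  obtain ⟨hne_uv, hext⟩ := hedge
  set A := convexHull ℝ (↑Vs : Set (E → ℝ)) with hA
  set B := convexHull ℝ (↑Ws : Set (E → ℝ)) with hB
  have hAconv : Convex ℝ A := convex_convexHull ℝ _
  have hv : v = t • w + u := by rw [← huv]; abel
  set onLine : (E → ℝ) → Prop := fun x => ∃ s : ℝ, x = s • w + u with honline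
  set V₁ : Finset (E → ℝ) := Vs.filter (fun x => ¬ onLine x) with hV₁
  -- u is not in the hull of the projected off-line vertices
  set C : Set (E → ℝ) := convexHull ℝ (barL w '' ↑V₁) with hC
  have hCcomp : IsCompact C := ((V₁.finite_toSet).image _).isCompact_convexHull ℝ
  have hunotC : barL w u ∉ C := by
    intro hmem
    rw [hC, ← LinearMap.image_convexHull] at hmem
    obtain ⟨z, hzhull, hzbar⟩ := hmem
    obtain ⟨cc, hcc⟩ := barL_eq hzbar
    have hzA : z ∈ A :=
      convexHull_mono (Finset.coe_subset.mpr (Finset.filter_subset _ _)) hzhull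
    have hzF : z ∈ segment ℝ u v := line_cap hext ht huv hzA hcc
    rw [Finset.convexHull_eq] at hzhull
    obtain ⟨μ, h0, h1, hcm⟩ := hzhull
    rw [Finset.centerMass_eq_of_sum_1 _ id h1] at hcm
    simp only [id_eq] at hcm
    set V₁' := V₁.filter (fun x => μ x ≠ 0) with hV₁'
    have hsupp : ∑ x ∈ V₁', μ x • x = z := by
      rw [hV₁', Finset.sum_filter_of_ne (fun x _ h => by
        intro h0x
        exact h (by rw [h0x, zero_smul]))]
      exact hcm
    have hsum1' : ∑ x ∈ V₁', μ x = 1 := by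
      rw [hV₁', Finset.sum_filter_of_ne (fun x _ h => h)]
      exact h1
    have hne' : V₁'.Nonempty := by
      rcases Finset.eq_empty_or_nonempty V₁' with h | h
      · rw [h, Finset.sum_empty] at hsum1'
        norm_num at hsum1'
      · exact h
    obtain ⟨xx, hxx, hxxF⟩ := extreme_absorb hAconv hext hne'
      (fun i hi => lt_of_le_of_ne (h0 i (Finset.filter_subset _ _ hi))
        (Ne.symm (Finset.mem_filter.mp hi).2))
      hsum1'
      (fun i hi => subset_convexHull ℝ _
        (Finset.filter_subset _ _ ((Finset.filter_subset _ _) hi)))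
      (hsupp ▸ hzF)
    obtain ⟨θ, _, hθ⟩ := seg_param huv hxxF
    exact (Finset.mem_filter.mp (Finset.filter_subset _ _ hxx)).2 ⟨θ * t, hθ⟩
  -- separating functional
  obtain ⟨f, su, hfs, hfu⟩ :=
    geometric_hahn_banach_closed_point (convex_convexHull ℝ _) hCcomp.isClosed hunotC
  set ℓ₀ : (E → ℝ) →ₗ[ℝ] ℝ := f.toLinearMap.comp (barL w) with hℓ₀
  have hℓ₀w : ℓ₀ w = 0 := by simp [hℓ₀, barL_w hw]
  have hℓ₀P : ∀ x ∈ V₁, 0 < ℓ₀ (u - x) := by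
    intro x hx
    have h1 : f (barL w x) < su :=
      hfs _ (subset_convexHull ℝ _ ⟨x, by exact_mod_cast hx, rfl⟩)
    have h2 : ℓ₀ (u - x) = f (barL w u) - f (barL w x) := by
      simp [hℓ₀, map_sub]
    rw [h2]
    linarith [hfu]
  set P : Finset (E → ℝ) := V₁.image (fun x => u - x) with hPdef
  set D : Finset (E → ℝ) :=
    ((Ws ×ˢ Ws).image (fun pq => barL w (pq.1 - pq.2))).filter (fun d => d ≠ 0) with hDdef
  have hDprop : ∀ d ∈ D, d ≠ 0 ∧ dotL d w = 0 := by
    intro d hd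
    rw [hDdef, Finset.mem_filter] at hd
    obtain ⟨hd1, hd2⟩ := hd
    refine ⟨hd2, ?_⟩
    obtain ⟨pq, _, rfl⟩ := Finset.mem_image.mp hd1
    exact dotL_barL_w w _
  obtain ⟨ℓ, hℓw, hℓP, hℓD⟩ := perturb w P D hDprop ℓ₀ hℓ₀w (by
    intro p hp
    obtain ⟨x, hx, rfl⟩ := Finset.mem_image.mp hp
    exact hℓ₀P x hx)
  have hℓP' : ∀ x ∈ V₁, ℓ x < ℓ u := by
    intro x hx
    have h1 := hℓP (u - x) (Finset.mem_image_of_mem _ hx)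
    rw [map_sub] at h1
    linarith
  have hconst : ∀ (z : E → ℝ) (s : ℝ), ℓ (s • w + z) = ℓ z := by
    intro z s
    simp [map_add, map_smul, hℓw, smul_eq_mul]
  -- the face of A
  have hleV : ∀ x ∈ Vs, ℓ x ≤ ℓ u := by
    intro x hx
    by_cases hxl : onLine x
    · obtain ⟨s, rfl⟩ := hxl
      rw [hconst]
    · exact (hℓP' x (Finset.mem_filter.mpr ⟨hx, hxl⟩)).le
  have hleA : ∀ x ∈ A, ℓ x ≤ ℓ u := hull_le hleV
  have hFaceA : ∀ z ∈ A, ℓ z = ℓ u → z ∈ segment ℝ u v := by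
    intro z hzA hzc
    have hsub := face_hull_filter hleV hzA hzc
    have hss : {x : E → ℝ | x ∈ Vs ∧ ℓ x = ℓ u} ⊆ segment ℝ u v := by
      rintro x ⟨hxV, hxc⟩
      by_cases hxl : onLine x
      · obtain ⟨s, hs⟩ := hxl
        exact line_cap hext ht huv (subset_convexHull ℝ _ hxV) hs
      · exact absurd hxc (ne_of_lt (hℓP' x (Finset.mem_filter.mpr ⟨hxV, hxl⟩)))
    exact convexHull_min hss (convex_segment u v) hsub
  have hFaceA' : ∀ z ∈ segment ℝ u v, ℓ z = ℓ u := by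
    intro z hz
    obtain ⟨θ, _, rfl⟩ := seg_param huv hz
    rw [hconst]
  -- the face of B
  have hWne : Ws.Nonempty := by
    rwa [← Finset.coe_nonempty]
  obtain ⟨q₀, hq₀W, hq₀⟩ := Finset.exists_mem_eq_sup' hWne (fun x => ℓ x)
  set m := Ws.sup' hWne (fun x => ℓ x) with hm
  have hleW : ∀ x ∈ Ws, ℓ x ≤ m := fun x hx => Finset.le_sup' (fun x => ℓ x) hx
  have hleB : ∀ x ∈ B, ℓ x ≤ m := hull_le hleW
  set FB := {b : E → ℝ | b ∈ B ∧ ℓ b = m} with hFBdef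
  have hFBline : ∀ b ∈ FB, ∃ s : ℝ, b = s • w + q₀ := by
    rintro b ⟨hbB, hbm⟩
    have hsub := face_hull_filter hleW hbB hbm
    have hhyp : {x : E → ℝ | x ∈ Ws ∧ ℓ x = m} ⊆ {x | barL w x = barL w q₀} := by
      rintro x ⟨hxW, hxm⟩
      by_contra hne'
      have hdmem : barL w (x - q₀) ∈ D := by
        rw [hDdef, Finset.mem_filter]
        constructor
        · exact Finset.mem_image.mpr ⟨(x, q₀), Finset.mem_product.mpr ⟨hxW, hq₀W⟩, rfl⟩
        · intro h0
          apply hne'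
          rw [map_sub] at h0
          exact sub_eq_zero.mp h0
      apply hℓD _ hdmem
      rw [apply_barL hℓw, map_sub, hxm, ← hq₀, sub_self]
    have hcv : Convex ℝ {x : E → ℝ | barL w x = barL w q₀} :=
      (convex_singleton (barL w q₀)).linear_preimage (barL w)
    have hbq := convexHull_min hhyp hcv hsub
    obtain ⟨s, hs⟩ := barL_eq hbq
    exact ⟨s, hs⟩
  have hBcomp : IsCompact B := (Ws.finite_toSet).isCompact_convexHull ℝ
  have hℓcont : Continuous ℓ := ℓ.continuous_of_finiteDimensional
  have hFBclosed : IsClosed FB :=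
    hBcomp.isClosed.inter ((isClosed_singleton).preimage hℓcont)
  have hFBconv : Convex ℝ FB :=
    (convex_convexHull ℝ (↑Ws : Set (E → ℝ))).inter
      (convex_hyperplane (LinearMap.isLinear ℓ) m)

  have hFBne : FB.Nonempty := ⟨q₀, subset_convexHull ℝ _ hq₀W, hq₀.symm⟩
  obtain ⟨cc, dd, hccdd, hFBeq⟩ := line_seg hw hFBne
    hFBconv hFBclosed (hBcomp.isBounded.subset (fun b hb => hb.1)) hFBline
  -- the candidate edge of A + B
  have hseg_uv : segment ℝ u v = segment ℝ u (t • w + u) := by rw [← hv]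
  have hFBseg : FB = segment ℝ (cc • w + q₀) ((dd - cc) • w + (cc • w + q₀)) := by
    have harg : dd • w + q₀ = (dd - cc) • w + (cc • w + q₀) := by module
    rw [hFBeq, harg]
  have hGseq : segment ℝ u v + FB
      = segment ℝ (u + (cc • w + q₀)) ((t + (dd - cc)) • w + (u + (cc • w + q₀))) := by
    rw [hseg_uv, hFBseg, seg_add_seg u (cc • w + q₀) w ht.le (by linarith)]
  have hGface : segment ℝ u v + FB = {z | z ∈ A + B ∧ ℓ z = ℓ u + m} := by
    ext z
    constructor
    · intro hz
      rw [Set.mem_add] at hz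
      obtain ⟨x, hx, y, hy, rfl⟩ := hz
      exact ⟨Set.mem_add.mpr ⟨x, hext.1 hx, y, hy.1, rfl⟩,
        by rw [map_add, hFaceA' x hx, hy.2]⟩
    · rintro ⟨hzAB, hzc⟩
      rw [Set.mem_add] at hzAB
      obtain ⟨x, hxA, y, hyB, rfl⟩ := hzAB
      rw [map_add] at hzc
      have h1 : ℓ x ≤ ℓ u := hleA x hxA
      have h2 : ℓ y ≤ m := hleB y hyB
      have hxc : ℓ x = ℓ u := by linarith
      have hym : ℓ y = m := by linarith
      exact Set.mem_add.mpr ⟨x, hFaceA x hxA hxc, y, ⟨hyB, hym⟩, rfl⟩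
  have hleAB : ∀ z ∈ A + B, ℓ z ≤ ℓ u + m := by
    intro z hz
    rw [Set.mem_add] at hz
    obtain ⟨x, hxA, y, hyB, rfl⟩ := hz
    rw [map_add]
    have := hleA x hxA
    have := hleB y hyB
    linarith
  have hGext : IsExtreme ℝ (A + B) (segment ℝ u v + FB) := by
    constructor
    · rw [hGface]
      exact fun z hz => hz.1
    · intro x₁ hx₁ x₂ hx₂ z hzG hzseg
      rw [hGface] at hzG
      obtain ⟨lam, mu, hlam, hmu, hsum, heq⟩ := hzseg
      have hz2 : ℓ z = ℓ u + m := hzG.2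
      have heqℓ : lam * ℓ x₁ + mu * ℓ x₂ = ℓ u + m := by
        have h3 : ℓ (lam • x₁ + mu • x₂) = ℓ z := by rw [heq]
        simp only [map_add, map_smul, smul_eq_mul] at h3
        rw [hz2] at h3
        exact h3
      have hl1 : ℓ x₁ ≤ ℓ u + m := hleAB x₁ hx₁
      have hl2 : ℓ x₂ ≤ ℓ u + m := hleAB x₂ hx₂
      have e3 : lam * (ℓ u + m) + mu * (ℓ u + m) = ℓ u + m := by
        rw [← add_mul, hsum, one_mul]
      have hx₁c : ℓ x₁ = ℓ u + m := by
        by_contra hne2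
        have hlt : ℓ x₁ < ℓ u + m := lt_of_le_of_ne hl1 hne2
        have e1 : lam * ℓ x₁ < lam * (ℓ u + m) := mul_lt_mul_of_pos_left hlt hlam
        have e2 : mu * ℓ x₂ ≤ mu * (ℓ u + m) := mul_le_mul_of_nonneg_left hl2 hmu.le
        linarith
      have hx₂c : ℓ x₂ = ℓ u + m := by
        by_contra hne2
        have hlt : ℓ x₂ < ℓ u + m := lt_of_le_of_ne hl2 hne2
        have e1 : mu * ℓ x₂ < mu * (ℓ u + m) := mul_lt_mul_of_pos_left hlt hmu
        have e2 : lam * ℓ x₁ ≤ lam * (ℓ u + m) := mul_le_mul_of_nonneg_left hl1 hlam.le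
        linarith
      rw [hGface]
      exact ⟨hx₁, hx₁c⟩
  rw [hGseq] at hGext
  have htdc : t + (dd - cc) ≠ 0 := by linarith
  refine ⟨u + (cc • w + q₀), (t + (dd - cc)) • w + (u + (cc • w + q₀)),
    ⟨?_, hGext⟩, t + (dd - cc), htdc, by module⟩
  intro heq
  apply htdc
  have h0 : (t + (dd - cc)) • w = 0 := by
    have : ((t + (dd - cc)) • w + (u + (cc • w + q₀))) - (u + (cc • w + q₀))
        = (t + (dd - cc)) • w := by abel
    rw [← this, ← heq, sub_self]
  exact (smul_eq_zero.mp h0).resolve_right hw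

/-- Backward direction (binary). -/
lemma backward (Vs Ws : Finset (E → ℝ)) (hWs : (↑Ws : Set (E → ℝ)).Nonempty)
    {w : E → ℝ} (hw : w ≠ 0)
    (h : IsEdgeDirOf (convexHull ℝ (↑Vs : Set (E → ℝ))) w) :
    IsEdgeDirOf (convexHull ℝ (↑Vs : Set (E → ℝ)) + convexHull ℝ (↑Ws : Set (E → ℝ))) w := by
  obtain ⟨u, v, hedge, t, ht0, hvu⟩ := h
  rcases ht0.lt_or_gt with hneg | hpos
  · have hedge' : IsEdgeOf (convexHull ℝ (↑Vs : Set (E → ℝ))) v u :=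
      ⟨hedge.1.symm, by rw [segment_symm]; exact hedge.2⟩
    have hvu' : u - v = (-t) • w := by rw [neg_smul, ← hvu]; abel
    exact backward' Vs Ws hWs hw (by linarith) hvu' hedge'
  · exact backward' Vs Ws hWs hw hpos hvu hedge

/-- The binary case of the theorem. -/
lemma binary (Vs Ws : Finset (E → ℝ)) (hVs : (↑Vs : Set (E → ℝ)).Nonempty)
    (hWs : (↑Ws : Set (E → ℝ)).Nonempty) {w : E → ℝ} (hw : w ≠ 0) :
    IsEdgeDirOf (convexHull ℝ (↑Vs : Set (E → ℝ)) + convexHull ℝ (↑Ws : Set (E → ℝ))) w ↔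
      IsEdgeDirOf (convexHull ℝ (↑Vs : Set (E → ℝ))) w ∨
      IsEdgeDirOf (convexHull ℝ (↑Ws : Set (E → ℝ))) w := by
  constructor
  · intro h
    exact forward (convex_convexHull ℝ _) (convex_convexHull ℝ _)
      ((Vs.finite_toSet).isCompact_convexHull ℝ) ((Ws.finite_toSet).isCompact_convexHull ℝ) hw h
  · rintro (h | h)
    · exact backward Vs Ws hWs hw h
    · rw [add_comm]
      exact backward Ws Vs hVs hw h

end Euclidean

lemma no_edge_zero {V : Type*} [NormedAddCommGroup V] [NormedSpace ℝ V] {w : V}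
    (h : IsEdgeDirOf (0 : Set V) w) : False := by
  obtain ⟨u, v, ⟨hne, hext⟩, _⟩ := h
  have hu : u ∈ (0 : Set V) := hext.1 (left_mem_segment ℝ u v)
  have hv : v ∈ (0 : Set V) := hext.1 (right_mem_segment ℝ u v)
  rw [Set.mem_zero] at hu hv
  exact hne (hu.trans hv.symm)

lemma sum_polytopes {V : Type*} [NormedAddCommGroup V] [NormedSpace ℝ V] {k : ℕ}
    (Q : Fin k → Set V)
    (h : ∀ i, ∃ Vs : Finset V, (Vs : Set V).Nonempty ∧ Q i = convexHull ℝ (↑Vs : Set V)) :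
    ∃ Vs : Finset V, (Vs : Set V).Nonempty ∧ ∑ i : Fin k, Q i = convexHull ℝ (↑Vs : Set V) := by
  classical
  induction k with
  | zero =>
    refine ⟨{0}, by simp, ?_⟩
    simp [Finset.univ_eq_empty, convexHull_singleton]
    rfl
  | succ n ih =>
    obtain ⟨V0, hV0ne, hQ0⟩ := h 0
    obtain ⟨Vt, hVtne, hQt⟩ := ih (fun i => Q i.succ) (fun i => h i.succ)
    refine ⟨V0 + Vt, ?_, ?_⟩
    · obtain ⟨a, ha⟩ := hV0ne
      obtain ⟨b, hb⟩ := hVtne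
      exact ⟨a + b, by rw [Finset.coe_add]; exact Set.add_mem_add ha hb⟩
    · rw [Fin.sum_univ_succ, hQ0, hQt, Finset.coe_add, convexHull_add]

theorem stmt6 {E : Type*} [Fintype E] (k : ℕ) (Q : Fin k → Set (E → ℝ))
    (hpoly : ∀ i, ∃ Vs : Finset (E → ℝ), (Vs : Set (E → ℝ)).Nonempty ∧
      Q i = convexHull ℝ (↑Vs : Set (E → ℝ)))
    (w : E → ℝ) (hw : w ≠ 0) :
    IsEdgeDirOf (∑ i : Fin k, Q i) w ↔ ∃ i, IsEdgeDirOf (Q i) w := by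
  induction k with
  | zero =>
    rw [Finset.univ_eq_empty, Finset.sum_empty]
    constructor
    · intro h
      exact (no_edge_zero h).elim
    · rintro ⟨i, _⟩
      exact i.elim0
  | succ n ih =>
    rw [Fin.sum_univ_succ]
    obtain ⟨V0, hV0, hQ0⟩ := hpoly 0
    obtain ⟨Vt, hVt, hQt⟩ := sum_polytopes (fun i => Q i.succ) (fun i => hpoly i.succ)
    have hbin := binary V0 Vt hV0 hVt hw
    rw [← hQ0, ← hQt] at hbin
    rw [hbin, ih (fun i => Q i.succ) (fun i => hpoly i.succ)]
    exact (Fin.exists_fin_succ (P := fun i => IsEdgeDirOf (Q i) w)).symm
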